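/- In the tree-knapsack problem (rooted tree Γ with non-root nodes N, values α_v ≥ 0, weights β_v ≥ 0, budget B ≥ 0), there exists an integral feasible solution (a downwards-closed set S ⊆ N with Σ_{v∈S} β_v ≤ B) whose value Σ_{v∈S} α_v is at least OPT_LP − max_{chains C ⊆ N} Σ_{v∈C} α_v, where OPT_LP is the optimum of the LP relaxation (maximize Σ α_v x_v subject to x_v ≤ x_u for each child u of v, Σ β_v x_v ≤ B, 0 ≤ x ≤ 1). -/

import Mathlib

open Finset

set_option linter.unusedSectionVars false
set_option linter.unusedVariables false
set_option maxHeartbeats 1000000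

namespace Stmt4Aux


variable {ι : Type*} [Fintype ι] [DecidableEq ι]

lemma root_fix {r : ι} {parent : ι → ι} (hroot : parent r = r) (n : ℕ) :
    parent^[n] r = r := Function.iterate_fixed hroot n

variable (r : ι) (parent : ι → ι)

noncomputable def dep (htree : ∀ v : ι, ∃ n : ℕ, parent^[n] v = r) (v : ι) : ℕ :=
  Nat.find (htree v)

variable (htree : ∀ v : ι, ∃ n : ℕ, parent^[n] v = r)

lemma dep_spec (v : ι) : parent^[dep r parent htree v] v = r := Nat.find_spec (htree v)

lemma dep_min {v : ι} {n : ℕ} (h : parent^[n] v = r) : dep r parent htree v ≤ n :=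
  Nat.find_min' _ h

lemma dep_parent (hroot : parent r = r) {v : ι} (hv : v ≠ r) :
    dep r parent htree (parent v) + 1 = dep r parent htree v := by
  have h1 : 1 ≤ dep r parent htree v := by
    rcases Nat.eq_zero_or_pos (dep r parent htree v) with h | h
    · exfalso; apply hv
      have := dep_spec r parent htree v
      rwa [h, Function.iterate_zero, id] at this
    · omega
  have hup : dep r parent htree (parent v) ≤ dep r parent htree v - 1 := by
    apply dep_min
    have := dep_spec r parent htree v
    rw [show dep r parent htree v = (dep r parent htree v - 1) + 1 by omega,
      Function.iterate_succ_apply] at this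
    exact this
  have hdown : dep r parent htree v ≤ dep r parent htree (parent v) + 1 := by
    apply dep_min
    rw [Function.iterate_succ_apply]
    exact dep_spec r parent htree (parent v)
  omega

lemma dep_iterate (hroot : parent r = r) {v : ι} :
    ∀ n : ℕ, parent^[n] v ≠ r → dep r parent htree (parent^[n] v) + n = dep r parent htree v := by
  intro n
  induction n with
  | zero => simp
  | succ n ih =>
    intro hne
    have hvn : parent^[n] v ≠ r := by
      intro h
      apply hne
      rw [Function.iterate_succ_apply', h, hroot]
    rw [Function.iterate_succ_apply'] at hne ⊢
    have := dep_parent r parent htree hroot hvn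
    have := ih hvn
    omega

/-- strict ancestor has strictly smaller depth -/
lemma dep_lt_of_strict_anc (hroot : parent r = r) {u v : ι} {n : ℕ} (hn : n ≠ 0)
    (h : parent^[n] u = v) (hv : v ≠ r) :
    dep r parent htree v < dep r parent htree u := by
  have := dep_iterate r parent htree hroot (v := u) n (by rw [h]; exact hv)
  rw [h] at this
  omega


section Telescope


noncomputable def prevv (W : Finset ℝ) (t : ℝ) : ℝ :=
  (insert (0:ℝ) (W.filter (fun s => s < t))).max' (insert_nonempty _ _)

lemma prevv_nonneg (W : Finset ℝ) (t : ℝ) : 0 ≤ prevv W t :=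
  le_max' _ _ (mem_insert_self _ _)

lemma prevv_le (W : Finset ℝ) (hW : ∀ s ∈ W, 0 ≤ s) {t : ℝ} (ht : 0 ≤ t) :
    prevv W t ≤ t := by
  apply max'_le
  intro y hy
  rcases mem_insert.mp hy with rfl | hy
  · exact ht
  · exact (mem_filter.mp hy).2.le

lemma telescope (W : Finset ℝ) (hW : ∀ s ∈ W, 0 ≤ s) :
    ∀ N : ℕ, ∀ c ∈ W, (W.filter (fun s => s ≤ c)).card ≤ N →
      ∑ t ∈ W.filter (fun s => s ≤ c), (t - prevv W t) = c := by
  intro N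
  induction N with
  | zero =>
    intro c hc hcard
    exfalso
    have : c ∈ W.filter (fun s => s ≤ c) := mem_filter.mpr ⟨hc, le_refl c⟩
    have := Finset.card_pos.mpr ⟨c, this⟩
    omega
  | succ N ih =>
    intro c hc hcard
    have hcmem : c ∈ W.filter (fun s => s ≤ c) := mem_filter.mpr ⟨hc, le_refl c⟩
    by_cases hbe : W.filter (fun s => s < c) = ∅
    · have hsingle : W.filter (fun s => s ≤ c) = {c} := by
        ext t
        simp only [mem_filter, mem_singleton]
        constructor
        · rintro ⟨htW, htc⟩
          rcases eq_or_lt_of_le htc with h | h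
          · exact h
          · exfalso
            have : t ∈ W.filter (fun s => s < c) := mem_filter.mpr ⟨htW, h⟩
            rw [hbe] at this; simp at this
        · rintro rfl; exact ⟨hc, le_refl _⟩
      have hprev : prevv W c = 0 := by
        apply le_antisymm
        · apply max'_le
          intro y hy
          rcases mem_insert.mp hy with rfl | hy
          · exact le_refl _
          · rw [hbe] at hy; simp at hy
        · exact prevv_nonneg W c
      rw [hsingle, Finset.sum_singleton, hprev, sub_zero]
    · have hne : (W.filter (fun s => s < c)).Nonempty := nonempty_iff_ne_empty.mpr hbe
      set c' := (W.filter (fun s => s < c)).max' hne with hc'def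
      have hc'mem : c' ∈ W.filter (fun s => s < c) := max'_mem _ hne
      have hc'W : c' ∈ W := (mem_filter.mp hc'mem).1
      have hc'lt : c' < c := (mem_filter.mp hc'mem).2
      have hprev : prevv W c = c' := by
        apply le_antisymm
        · apply max'_le
          intro y hy
          rcases mem_insert.mp hy with rfl | hy
          · exact hW c' hc'W
          · exact le_max' _ _ hy
        · exact le_max' _ _ (mem_insert_of_mem hc'mem)
      have herase : (W.filter (fun s => s ≤ c)).erase c = W.filter (fun s => s ≤ c') := by
        ext t
        simp only [mem_erase, mem_filter]
        constructor
        · rintro ⟨htne, htW, htc⟩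
          refine ⟨htW, ?_⟩
          have ht : t < c := lt_of_le_of_ne htc htne
          rw [hc'def]
          exact Finset.le_max' (W.filter (fun s => s < c)) t (Finset.mem_filter.mpr ⟨htW, ht⟩)
        · rintro ⟨htW, htc'⟩
          exact ⟨by linarith, htW, by linarith⟩
      have hcard' : (W.filter (fun s => s ≤ c')).card ≤ N := by
        rw [← herase]
        have := Finset.card_erase_of_mem hcmem
        have hpos := Finset.card_pos.mpr ⟨c, hcmem⟩
        omega
      have hihres := ih c' hc'W hcard'
      have hsplit := Finset.sum_erase_add (W.filter (fun s => s ≤ c)) (fun t => t - prevv W t) hcmem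
      rw [herase] at hsplit
      rw [← hsplit, hihres]
      show c' + (c - prevv W c) = c
      rw [hprev]
      ring


end Telescope

section CMsec


variable {ι : Type*} [Fintype ι] [DecidableEq ι] (r : ι) (parent : ι → ι)
variable (α : {v : ι // v ≠ r} → ℝ)

def chainP (C : Finset {v : ι // v ≠ r}) : Prop :=
  ∀ u ∈ C, ∀ v ∈ C, u = v ∨ (∃ n : ℕ, parent^[n] u.1 = v.1) ∨ (∃ n : ℕ, parent^[n] v.1 = u.1)

def CMs (F : Finset {v : ι // v ≠ r}) : Set ℝ :=
  {t | ∃ C : Finset {v : ι // v ≠ r}, C ⊆ F ∧ chainP r parent C ∧ t = ∑ v ∈ C, α v}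

noncomputable def CM (F : Finset {v : ι // v ≠ r}) : ℝ := sSup (CMs r parent α F)

lemma CMs_bdd (F) : BddAbove (CMs r parent α F) := by
  have : CMs r parent α F ⊆ Set.range (fun C : Finset {v : ι // v ≠ r} => ∑ v ∈ C, α v) := by
    rintro t ⟨C, _, _, rfl⟩; exact ⟨C, rfl⟩
  exact (Set.finite_range _).bddAbove.mono this

lemma CMs_mem0 (F) : (0:ℝ) ∈ CMs r parent α F :=
  ⟨∅, empty_subset _, by intro u hu; simp at hu, by simp⟩

lemma CM_nonneg (F) : 0 ≤ CM r parent α F :=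
  le_csSup (CMs_bdd r parent α F) (CMs_mem0 r parent α F)

lemma le_CM {C F : Finset {v : ι // v ≠ r}} (hCF : C ⊆ F) (hc : chainP r parent C) :
    ∑ v ∈ C, α v ≤ CM r parent α F :=
  le_csSup (CMs_bdd r parent α F) ⟨C, hCF, hc, rfl⟩

lemma CM_mono {F F' : Finset {v : ι // v ≠ r}} (h : F ⊆ F') :
    CM r parent α F ≤ CM r parent α F' := by
  apply csSup_le_csSup (CMs_bdd r parent α F') ⟨0, CMs_mem0 r parent α F⟩
  rintro t ⟨C, hCF, hc, rfl⟩
  exact ⟨C, hCF.trans h, hc, rfl⟩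

lemma CM_erase_top {F : Finset {v : ι // v ≠ r}} {m : {v : ι // v ≠ r}} (hm : m ∈ F)
    (hcomp : ∀ u ∈ F, ∃ n : ℕ, parent^[n] u.1 = m.1) :
    α m + CM r parent α (F.erase m) ≤ CM r parent α F := by
  have h : CM r parent α (F.erase m) ≤ CM r parent α F - α m := by
    apply csSup_le ⟨0, CMs_mem0 r parent α _⟩
    rintro t ⟨C, hCF, hc, rfl⟩
    have hmC : m ∉ C := fun h => (Finset.mem_erase.mp (hCF h)).1 rfl
    have hins : ∑ v ∈ insert m C, α v ≤ CM r parent α F := by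
      apply le_CM
      · intro w hw
        rcases Finset.mem_insert.mp hw with rfl | hw
        · exact hm
        · exact (Finset.erase_subset _ _) (hCF hw)
      · intro u hu v hv
        rcases Finset.mem_insert.mp hu with hu | hu
        · rcases Finset.mem_insert.mp hv with hv | hv
          · exact Or.inl (hu.trans hv.symm)
          · exact Or.inr (Or.inr (by rw [hu]; exact hcomp v ((Finset.erase_subset _ _) (hCF hv))))
        · rcases Finset.mem_insert.mp hv with hv | hv
          · exact Or.inr (Or.inl (by rw [hv]; exact hcomp u ((Finset.erase_subset _ _) (hCF hu))))
          · exact hc u hu v hv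
    rw [Finset.sum_insert hmC] at hins
    linarith
  linarith


end CMsec

section DC
variable (r : ι) (parent : ι → ι)
def dcF (S : Finset {v : ι // v ≠ r}) : Prop :=
  ∀ v ∈ S, ∀ u : {v : ι // v ≠ r}, parent u.1 = v.1 → u ∈ S
end DC

section Main
variable {ι : Type*} [Fintype ι] [DecidableEq ι] (r : ι) (parent : ι → ι)
variable (α β : {v : ι // v ≠ r} → ℝ)
variable (B : ℝ)

lemma star (htree : ∀ v : ι, ∃ n : ℕ, parent^[n] v = r) (hroot : parent r = r)
    (hα : ∀ v, 0 ≤ α v) (hβ : ∀ v, 0 ≤ β v) :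
    ∀ N : ℕ, ∀ F : Finset {v : ι // v ≠ r}, F.card ≤ N → ∀ θ b : ℝ,
      0 ≤ θ → θ ≤ 1 → θ * (∑ v ∈ F, β v) ≤ b →
      ∃ G : Finset {v : ι // v ≠ r}, G ⊆ F ∧
        (∀ v ∈ G, ∀ u : {v : ι // v ≠ r}, parent u.1 = v.1 → u ∈ F → u ∈ G) ∧
        (∑ v ∈ G, β v) ≤ b ∧ θ * (∑ v ∈ F, α v) - CM r parent α F ≤ ∑ v ∈ G, α v := by
  intro N
  induction N with
  | zero =>
    intro F hF θ b hθ0 hθ1 hθb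
    have hFe : F = ∅ := Finset.card_eq_zero.mp (Nat.le_zero.mp hF)
    subst hFe
    refine ⟨∅, subset_rfl, by simp, by simpa using hθb, ?_⟩
    simpa using CM_nonneg r parent α (∅ : Finset {v : ι // v ≠ r})
  | succ N ih =>
    intro F hFcard θ b hθ0 hθ1 hθb
    classical
    have hβF0 : 0 ≤ ∑ v ∈ F, β v := Finset.sum_nonneg fun v _ => hβ v
    have hαF0 : 0 ≤ ∑ v ∈ F, α v := Finset.sum_nonneg fun v _ => hα v
    have hb0 : 0 ≤ b := le_trans (mul_nonneg hθ0 hβF0) hθb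
    by_cases hfit : (∑ v ∈ F, β v) ≤ b
    · refine ⟨F, subset_rfl, fun v hv u hu huF => huF, hfit, ?_⟩
      have := CM_nonneg r parent α F
      nlinarith
    · push_neg at hfit
      have hFne : F.Nonempty := by
        by_contra h
        rw [not_nonempty_iff_eq_empty] at h
        subst h
        simp at hfit
        linarith
      obtain ⟨m, hmF, hmmin⟩ := F.exists_min_image (fun v => dep r parent htree v.1) hFne
      have hnopar : ∀ v ∈ F, parent m.1 ≠ v.1 := by
        intro v hv hpar
        have hd : dep r parent htree v.1 + 1 = dep r parent htree m.1 := by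
          rw [← hpar]; exact dep_parent r parent htree hroot m.2
        have := hmmin v hv
        omega
      set R := F.filter (fun u => ∃ n : ℕ, parent^[n] u.1 = m.1) with hRdef
      set F' := F.filter (fun u => ¬ ∃ n : ℕ, parent^[n] u.1 = m.1) with hF'def
      have hmR : m ∈ R := mem_filter.mpr ⟨hmF, ⟨0, rfl⟩⟩
      have hRF : R ⊆ F := filter_subset _ _
      have hF'F : F' ⊆ F := filter_subset _ _
      have hmF' : m ∉ F' := fun h => (mem_filter.mp h).2 ⟨0, rfl⟩
      have f1 : ∀ v ∈ R, ∀ u : {v : ι // v ≠ r}, parent u.1 = v.1 → u ∈ F → u ∈ R := by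
        intro v hv u hpar huF
        obtain ⟨n, hn⟩ := (mem_filter.mp hv).2
        exact mem_filter.mpr ⟨huF, ⟨n + 1, by
          rw [Function.iterate_succ_apply, hpar, hn]⟩⟩
      have f2 : ∀ v ∈ F', ∀ u : {v : ι // v ≠ r}, parent u.1 = v.1 → u ∈ F → u ∈ F' := by
        intro v hv u hpar huF
        refine mem_filter.mpr ⟨huF, ?_⟩
        rintro ⟨n, hn⟩
        match n, hn with
        | 0, hn =>
          simp only [Function.iterate_zero, id] at hn
          exact hnopar v (hF'F hv) (by rw [← hpar, hn])
        | n + 1, hn =>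
          apply (mem_filter.mp hv).2
          refine ⟨n, ?_⟩
          rw [Function.iterate_succ_apply, hpar] at hn
          exact hn
      have hsplitβ : (∑ v ∈ R, β v) + (∑ v ∈ F', β v) = ∑ v ∈ F, β v :=
        Finset.sum_filter_add_sum_filter_not F _ β
      have hsplitα : (∑ v ∈ R, α v) + (∑ v ∈ F', α v) = ∑ v ∈ F, α v :=
        Finset.sum_filter_add_sum_filter_not F _ α
      have hβR0 : 0 ≤ ∑ v ∈ R, β v := Finset.sum_nonneg fun v _ => hβ v
      have hβF'0 : 0 ≤ ∑ v ∈ F', β v := Finset.sum_nonneg fun v _ => hβ v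
      have hαR0 : 0 ≤ ∑ v ∈ R, α v := Finset.sum_nonneg fun v _ => hα v
      have hαF'0 : 0 ≤ ∑ v ∈ F', α v := Finset.sum_nonneg fun v _ => hα v
      have hdisj : Disjoint R F' := disjoint_filter_filter_not F F _
      by_cases htriv : F' = ∅
      · -- tree case : all of F is below m
        have hanc : ∀ u ∈ F, ∃ n : ℕ, parent^[n] u.1 = m.1 := by
          intro u hu
          by_contra h
          have : u ∈ F' := mem_filter.mpr ⟨hu, h⟩
          rw [htriv] at this
          simp at this
        have hcard : (F.erase m).card ≤ N := by
          have h1 := Finset.card_erase_of_mem hmF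
          have h2 : 1 ≤ F.card := Finset.card_pos.mpr hFne
          omega
        have hbud : θ * (∑ v ∈ F.erase m, β v) ≤ b := by
          have hle : (∑ v ∈ F.erase m, β v) ≤ ∑ v ∈ F, β v :=
            Finset.sum_le_sum_of_subset_of_nonneg (erase_subset _ _) (fun i _ _ => hβ i)
          nlinarith
        obtain ⟨G, hGsub, hGcl, hGb, hGval⟩ := ih (F.erase m) hcard θ b hθ0 hθ1 hbud
        refine ⟨G, hGsub.trans (erase_subset _ _), ?_, hGb, ?_⟩
        · intro v hv u hpar huF
          apply hGcl v hv u hpar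
          rw [mem_erase]
          refine ⟨?_, huF⟩
          rintro rfl
          exact hnopar v (hGsub.trans (erase_subset _ _) hv) hpar
        · have hCM := CM_erase_top r parent α hmF hanc
          have hsum : (∑ v ∈ F.erase m, α v) + α m = ∑ v ∈ F, α v :=
            Finset.sum_erase_add F α hmF
          have hαm : 0 ≤ α m := hα m
          nlinarith
      · have hF'ne : F'.Nonempty := nonempty_iff_ne_empty.mpr htriv
        obtain ⟨w, hwF'⟩ := hF'ne
        have hcardR : R.card ≤ N := by
          have hss : R ⊂ F := by
            refine ⟨hRF, fun hsub => ?_⟩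
            have : w ∈ R := hsub (hF'F hwF')
            exact (mem_filter.mp hwF').2 (mem_filter.mp this).2
          have := Finset.card_lt_card hss
          omega
        have hcardF' : F'.card ≤ N := by
          have hss : F' ⊂ F := by
            refine ⟨hF'F, fun hsub => ?_⟩
            exact hmF' (hsub hmF)
          have := Finset.card_lt_card hss
          omega
        have hCMR : CM r parent α R ≤ CM r parent α F := CM_mono r parent α hRF
        have hCMF' : CM r parent α F' ≤ CM r parent α F := CM_mono r parent α hF'F
        by_cases hβRz : (∑ v ∈ R, β v) ≤ 0
        · have hβRe : (∑ v ∈ R, β v) = 0 := le_antisymm hβRz hβR0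
          have hbud : θ * (∑ v ∈ F', β v) ≤ b := by
            rw [← hsplitβ, hβRe] at hθb
            simpa using hθb
          obtain ⟨G', hG'sub, hG'cl, hG'b, hG'val⟩ := ih F' hcardF' θ b hθ0 hθ1 hbud
          have hdisj2 : Disjoint R G' := hdisj.mono_right hG'sub
          refine ⟨R ∪ G', union_subset hRF (hG'sub.trans hF'F), ?_, ?_, ?_⟩
          · intro v hv u hpar huF
            rcases mem_union.mp hv with hv | hv
            · exact mem_union_left _ (f1 v hv u hpar huF)
            · by_cases hu : ∃ n : ℕ, parent^[n] u.1 = m.1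
              · exact mem_union_left _ (mem_filter.mpr ⟨huF, hu⟩)
              · exact mem_union_right _ (hG'cl v hv u hpar (mem_filter.mpr ⟨huF, hu⟩))
          · rw [Finset.sum_union hdisj2, hβRe]
            simpa using hG'b
          · rw [Finset.sum_union hdisj2, ← hsplitα]
            nlinarith
        · push_neg at hβRz
          by_cases hdens : (∑ v ∈ F', α v) * (∑ v ∈ R, β v) ≤ (∑ v ∈ R, α v) * (∑ v ∈ F', β v)
          · -- density of R at least density of F'
            by_cases hfitR : (∑ v ∈ R, β v) ≤ b
            · set θ' := min 1 ((b - ∑ v ∈ R, β v) / (∑ v ∈ F', β v)) with hθ'def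
              have hθ'0 : 0 ≤ θ' :=
                le_min zero_le_one (div_nonneg (by linarith) hβF'0)
              have hθ'1 : θ' ≤ 1 := min_le_left _ _
              have hθ'bud : θ' * (∑ v ∈ F', β v) ≤ b - ∑ v ∈ R, β v := by
                rcases eq_or_lt_of_le hβF'0 with hz | hz
                · rw [← hz, mul_zero]; linarith
                · calc θ' * (∑ v ∈ F', β v)
                      ≤ ((b - ∑ v ∈ R, β v) / (∑ v ∈ F', β v)) * (∑ v ∈ F', β v) :=
                        mul_le_mul_of_nonneg_right (min_le_right _ _) (le_of_lt hz)
                    _ = b - ∑ v ∈ R, β v := div_mul_cancel₀ _ (ne_of_gt hz)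
              obtain ⟨G', hG'sub, hG'cl, hG'b, hG'val⟩ :=
                ih F' hcardF' θ' (b - ∑ v ∈ R, β v) hθ'0 hθ'1 hθ'bud
              have hdisj2 : Disjoint R G' := hdisj.mono_right hG'sub
              have key : θ * (∑ v ∈ R, α v) + θ * (∑ v ∈ F', α v) ≤
                  (∑ v ∈ R, α v) + θ' * (∑ v ∈ F', α v) := by
                by_cases hc : 1 ≤ (b - ∑ v ∈ R, β v) / (∑ v ∈ F', β v)
                · have h1 : θ' = 1 := min_eq_left hc
                  rw [h1]; nlinarith
                · push_neg at hc
                  have hθ'eq : θ' = (b - ∑ v ∈ R, β v) / (∑ v ∈ F', β v) :=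
                    min_eq_right (le_of_lt hc)
                  rcases eq_or_lt_of_le hβF'0 with hz | hz
                  · have hαF'z : (∑ v ∈ F', α v) = 0 := by nlinarith
                    rw [hαF'z]; nlinarith
                  · have hmul : θ' * (∑ v ∈ F', β v) = b - ∑ v ∈ R, β v := by
                      rw [hθ'eq]; exact div_mul_cancel₀ _ (ne_of_gt hz)
                    rw [← mul_le_mul_iff_of_pos_right hz]
                    have hexp : ((∑ v ∈ R, α v) + θ' * (∑ v ∈ F', α v)) * (∑ v ∈ F', β v)
                        = (∑ v ∈ R, α v) * (∑ v ∈ F', β v)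
                          + (θ' * (∑ v ∈ F', β v)) * (∑ v ∈ F', α v) := by ring
                    rw [hexp, hmul]
                    have hbud2 : θ * (∑ v ∈ R, β v) + θ * (∑ v ∈ F', β v) ≤ b := by
                      rw [← hsplitβ] at hθb; linarith [hθb]
                    nlinarith [mul_le_mul_of_nonneg_right
                        (show θ * (∑ v ∈ F', β v) - (1 - θ) * (∑ v ∈ R, β v) ≤
                          b - ∑ v ∈ R, β v by linarith) hαF'0,
                      mul_le_mul_of_nonneg_left hdens (show (0:ℝ) ≤ 1 - θ by linarith)]
              refine ⟨R ∪ G', union_subset hRF (hG'sub.trans hF'F), ?_, ?_, ?_⟩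
              · intro v hv u hpar huF
                rcases mem_union.mp hv with hv | hv
                · exact mem_union_left _ (f1 v hv u hpar huF)
                · by_cases hu : ∃ n : ℕ, parent^[n] u.1 = m.1
                  · exact mem_union_left _ (mem_filter.mpr ⟨huF, hu⟩)
                  · exact mem_union_right _ (hG'cl v hv u hpar (mem_filter.mpr ⟨huF, hu⟩))
              · rw [Finset.sum_union hdisj2]; linarith
              · rw [Finset.sum_union hdisj2, ← hsplitα]
                nlinarith
            · -- recurse into R
              push_neg at hfitR
              set θ'' := b / (∑ v ∈ R, β v) with hθ''def
              have hθ''0 : 0 ≤ θ'' := div_nonneg hb0 hβR0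
              have hθ''1 : θ'' ≤ 1 := by
                rw [hθ''def, div_le_one hβRz]; exact le_of_lt hfitR
              have hmulR : θ'' * (∑ v ∈ R, β v) = b := by
                rw [hθ''def, div_mul_cancel₀ _ (ne_of_gt hβRz)]
              obtain ⟨G, hGsub, hGcl, hGb, hGval⟩ := ih R hcardR θ'' b hθ''0 hθ''1 hmulR.le
              have key : θ * (∑ v ∈ F, α v) ≤ θ'' * (∑ v ∈ R, α v) := by
                rw [← mul_le_mul_iff_of_pos_right hβRz]
                have hexp : θ'' * (∑ v ∈ R, α v) * (∑ v ∈ R, β v)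
                    = (θ'' * (∑ v ∈ R, β v)) * (∑ v ∈ R, α v) := by ring
                rw [hexp, hmulR]
                have hbud2 : θ * (∑ v ∈ R, β v) + θ * (∑ v ∈ F', β v) ≤ b := by
                  rw [← hsplitβ] at hθb; linarith [hθb]
                rw [← hsplitα]
                nlinarith [mul_le_mul_of_nonneg_left hdens hθ0]
              refine ⟨G, hGsub.trans hRF, ?_, hGb, ?_⟩
              · intro v hv u hpar huF
                exact hGcl v hv u hpar (f1 v (hGsub hv) u hpar huF)
              · nlinarith
          · -- density of F' strictly greater than density of R
            push_neg at hdens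
            by_cases hfitF' : (∑ v ∈ F', β v) ≤ b
            · set θ' := min 1 ((b - ∑ v ∈ F', β v) / (∑ v ∈ R, β v)) with hθ'def
              have hθ'0 : 0 ≤ θ' :=
                le_min zero_le_one (div_nonneg (by linarith) hβR0)
              have hθ'1 : θ' ≤ 1 := min_le_left _ _
              have hθ'bud : θ' * (∑ v ∈ R, β v) ≤ b - ∑ v ∈ F', β v := by
                calc θ' * (∑ v ∈ R, β v)
                    ≤ ((b - ∑ v ∈ F', β v) / (∑ v ∈ R, β v)) * (∑ v ∈ R, β v) :=
                      mul_le_mul_of_nonneg_right (min_le_right _ _) hβR0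
                  _ = b - ∑ v ∈ F', β v := div_mul_cancel₀ _ (ne_of_gt hβRz)
              obtain ⟨G'', hG''sub, hG''cl, hG''b, hG''val⟩ :=
                ih R hcardR θ' (b - ∑ v ∈ F', β v) hθ'0 hθ'1 hθ'bud
              have hdisj2 : Disjoint F' G'' := hdisj.symm.mono_right hG''sub
              have key : θ * (∑ v ∈ R, α v) + θ * (∑ v ∈ F', α v) ≤
                  (∑ v ∈ F', α v) + θ' * (∑ v ∈ R, α v) := by
                by_cases hc : 1 ≤ (b - ∑ v ∈ F', β v) / (∑ v ∈ R, β v)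
                · have h1 : θ' = 1 := min_eq_left hc
                  rw [h1]; nlinarith
                · push_neg at hc
                  have hθ'eq : θ' = (b - ∑ v ∈ F', β v) / (∑ v ∈ R, β v) :=
                    min_eq_right (le_of_lt hc)
                  have hmul : θ' * (∑ v ∈ R, β v) = b - ∑ v ∈ F', β v := by
                    rw [hθ'eq]; exact div_mul_cancel₀ _ (ne_of_gt hβRz)
                  rw [← mul_le_mul_iff_of_pos_right hβRz]
                  have hexp : ((∑ v ∈ F', α v) + θ' * (∑ v ∈ R, α v)) * (∑ v ∈ R, β v)
                      = (∑ v ∈ F', α v) * (∑ v ∈ R, β v)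
                        + (θ' * (∑ v ∈ R, β v)) * (∑ v ∈ R, α v) := by ring
                  rw [hexp, hmul]
                  have hbud2 : θ * (∑ v ∈ R, β v) + θ * (∑ v ∈ F', β v) ≤ b := by
                    rw [← hsplitβ] at hθb; linarith [hθb]
                  nlinarith [mul_le_mul_of_nonneg_right
                      (show θ * (∑ v ∈ R, β v) - (1 - θ) * (∑ v ∈ F', β v) ≤
                        b - ∑ v ∈ F', β v by linarith) hαR0,
                    mul_le_mul_of_nonneg_left hdens.le (show (0:ℝ) ≤ 1 - θ by linarith)]
              refine ⟨F' ∪ G'', union_subset hF'F (hG''sub.trans hRF), ?_, ?_, ?_⟩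
              · intro v hv u hpar huF
                rcases mem_union.mp hv with hv | hv
                · exact mem_union_left _ (f2 v hv u hpar huF)
                · exact mem_union_right _ (hG''cl v hv u hpar (f1 v (hG''sub hv) u hpar huF))
              · rw [Finset.sum_union hdisj2]; linarith
              · rw [Finset.sum_union hdisj2, ← hsplitα]
                nlinarith
            · -- recurse into F'
              push_neg at hfitF'
              have hβF'pos : 0 < ∑ v ∈ F', β v := lt_of_le_of_lt hb0 hfitF'
              set θ'' := b / (∑ v ∈ F', β v) with hθ''def
              have hθ''0 : 0 ≤ θ'' := div_nonneg hb0 hβF'0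
              have hθ''1 : θ'' ≤ 1 := by
                rw [hθ''def, div_le_one hβF'pos]; exact le_of_lt hfitF'
              have hmulR : θ'' * (∑ v ∈ F', β v) = b := by
                rw [hθ''def, div_mul_cancel₀ _ (ne_of_gt hβF'pos)]
              obtain ⟨G, hGsub, hGcl, hGb, hGval⟩ := ih F' hcardF' θ'' b hθ''0 hθ''1 hmulR.le
              have key : θ * (∑ v ∈ F, α v) ≤ θ'' * (∑ v ∈ F', α v) := by
                rw [← mul_le_mul_iff_of_pos_right hβF'pos]
                have hexp : θ'' * (∑ v ∈ F', α v) * (∑ v ∈ F', β v)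
                    = (θ'' * (∑ v ∈ F', β v)) * (∑ v ∈ F', α v) := by ring
                rw [hexp, hmulR]
                have hbud2 : θ * (∑ v ∈ R, β v) + θ * (∑ v ∈ F', β v) ≤ b := by
                  rw [← hsplitβ] at hθb; linarith [hθb]
                rw [← hsplitα]
                nlinarith [mul_le_mul_of_nonneg_left hdens.le hθ0]
              refine ⟨G, hGsub.trans hF'F, ?_, hGb, ?_⟩
              · intro v hv u hpar huF
                exact hGcl v hv u hpar (f2 v (hGsub hv) u hpar huF)
              · nlinarith


lemma move (p1 p2 p3 A1 A2 A3 B1 B2 B3 : ℝ)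
    (hp1 : 0 ≤ p1) (hp2 : 0 ≤ p2) (hp3 : 0 ≤ p3)
    (hA12 : A1 ≤ A2) (hA23 : A2 ≤ A3) (hB12 : B1 ≤ B2) (hB23 : B2 ≤ B3) :
    ∃ δ1 δ2 δ3 : ℝ, δ1 + δ2 + δ3 = 0 ∧ δ1 * B1 + δ2 * B2 + δ3 * B3 ≤ 0 ∧
      0 ≤ δ1 * A1 + δ2 * A2 + δ3 * A3 ∧ 0 ≤ p1 + δ1 ∧ 0 ≤ p2 + δ2 ∧ 0 ≤ p3 + δ3 ∧
      (p1 + δ1 = 0 ∨ p2 + δ2 = 0 ∨ p3 + δ3 = 0) := by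
  by_cases h23 : B2 = B3
  · refine ⟨0, -p2, p2, by ring, ?_, ?_, by linarith, by linarith, by linarith,
      Or.inr (Or.inl (by ring))⟩
    · have h : (0:ℝ) * B1 + (-p2) * B2 + p2 * B3 = p2 * (B3 - B2) := by ring
      rw [h, h23]; simp
    · nlinarith
  by_cases h12 : B1 = B2
  · refine ⟨-p1, p1, 0, by ring, ?_, ?_, by linarith, by linarith, by linarith,
      Or.inl (by ring)⟩
    · have h : (-p1) * B1 + p1 * B2 + (0:ℝ) * B3 = p1 * (B2 - B1) := by ring
      rw [h, h12]; simp
    · nlinarith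
  · have hlt12 : B1 < B2 := lt_of_le_of_ne hB12 h12
    have hlt23 : B2 < B3 := lt_of_le_of_ne hB23 h23
    have h13 : B1 < B3 := hlt12.trans hlt23
    by_cases hd : 0 ≤ (B3 - B2) * A1 + (B1 - B3) * A2 + (B2 - B1) * A3
    · have hw : (p2 / (B3 - B1)) * (B3 - B1) = p2 :=
        div_mul_cancel₀ _ (ne_of_gt (by linarith : (0:ℝ) < B3 - B1))
      have hw0 : 0 ≤ p2 / (B3 - B1) := div_nonneg hp2 (by linarith)
      refine ⟨(p2 / (B3 - B1)) * (B3 - B2), -p2, (p2 / (B3 - B1)) * (B2 - B1),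
        ?_, ?_, ?_, ?_, by linarith, ?_, Or.inr (Or.inl (by ring))⟩
      · have h : (p2 / (B3 - B1)) * (B3 - B2) + -p2 + (p2 / (B3 - B1)) * (B2 - B1)
            = (p2 / (B3 - B1)) * (B3 - B1) - p2 := by ring
        rw [h, hw]; ring
      · have h : (p2 / (B3 - B1)) * (B3 - B2) * B1 + (-p2) * B2 + (p2 / (B3 - B1)) * (B2 - B1) * B3
            = ((p2 / (B3 - B1)) * (B3 - B1) - p2) * B2 := by ring
        rw [h, hw]; simp
      · have h : (p2 / (B3 - B1)) * (B3 - B2) * A1 + (-p2) * A2 + (p2 / (B3 - B1)) * (B2 - B1) * A3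
            = (p2 / (B3 - B1)) * ((B3 - B2) * A1 + (B1 - B3) * A2 + (B2 - B1) * A3)
              + ((p2 / (B3 - B1)) * (B3 - B1) - p2) * A2 := by ring
        rw [h, hw]
        have := mul_nonneg hw0 hd
        nlinarith
      · have := mul_nonneg hw0 (show (0:ℝ) ≤ B3 - B2 by linarith)
        linarith
      · have := mul_nonneg hw0 (show (0:ℝ) ≤ B2 - B1 by linarith)
        linarith
    · push_neg at hd
      rcases le_total (p1 / (B3 - B2)) (p3 / (B2 - B1)) with hσ | hσ
      · have hw : (p1 / (B3 - B2)) * (B3 - B2) = p1 :=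
          div_mul_cancel₀ _ (ne_of_gt (by linarith : (0:ℝ) < B3 - B2))
        have hw0 : 0 ≤ p1 / (B3 - B2) := div_nonneg hp1 (by linarith)
        refine ⟨-((p1 / (B3 - B2)) * (B3 - B2)), (p1 / (B3 - B2)) * (B3 - B1),
          -((p1 / (B3 - B2)) * (B2 - B1)), by ring, ?_, ?_, ?_, ?_, ?_, Or.inl ?_⟩
        · have h : -((p1 / (B3 - B2)) * (B3 - B2)) * B1 + ((p1 / (B3 - B2)) * (B3 - B1)) * B2
              + (-((p1 / (B3 - B2)) * (B2 - B1))) * B3 = 0 := by ring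
          rw [h]
        · have h : -((p1 / (B3 - B2)) * (B3 - B2)) * A1 + ((p1 / (B3 - B2)) * (B3 - B1)) * A2
              + (-((p1 / (B3 - B2)) * (B2 - B1))) * A3
              = (p1 / (B3 - B2)) * (-((B3 - B2) * A1 + (B1 - B3) * A2 + (B2 - B1) * A3)) := by
            ring
          rw [h]
          exact mul_nonneg hw0 (by linarith)
        · rw [hw]; linarith
        · have := mul_nonneg hw0 (show (0:ℝ) ≤ B3 - B1 by linarith)
          linarith
        · have h := mul_le_mul_of_nonneg_right hσ (show (0:ℝ) ≤ B2 - B1 by linarith)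
          rw [div_mul_cancel₀ _ (ne_of_gt (show (0:ℝ) < B2 - B1 by linarith))] at h
          linarith
        · rw [hw]; ring
      · have hw : (p3 / (B2 - B1)) * (B2 - B1) = p3 :=
          div_mul_cancel₀ _ (ne_of_gt (by linarith : (0:ℝ) < B2 - B1))
        have hw0 : 0 ≤ p3 / (B2 - B1) := div_nonneg hp3 (by linarith)
        refine ⟨-((p3 / (B2 - B1)) * (B3 - B2)), (p3 / (B2 - B1)) * (B3 - B1),
          -((p3 / (B2 - B1)) * (B2 - B1)), by ring, ?_, ?_, ?_, ?_, ?_,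
          Or.inr (Or.inr ?_)⟩
        · have h : -((p3 / (B2 - B1)) * (B3 - B2)) * B1 + ((p3 / (B2 - B1)) * (B3 - B1)) * B2
              + (-((p3 / (B2 - B1)) * (B2 - B1))) * B3 = 0 := by ring
          rw [h]
        · have h : -((p3 / (B2 - B1)) * (B3 - B2)) * A1 + ((p3 / (B2 - B1)) * (B3 - B1)) * A2
              + (-((p3 / (B2 - B1)) * (B2 - B1))) * A3
              = (p3 / (B2 - B1)) * (-((B3 - B2) * A1 + (B1 - B3) * A2 + (B2 - B1) * A3)) := by
            ring
          rw [h]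
          exact mul_nonneg hw0 (by linarith)
        · have h := mul_le_mul_of_nonneg_right hσ (show (0:ℝ) ≤ B3 - B2 by linarith)
          rw [div_mul_cancel₀ _ (ne_of_gt (show (0:ℝ) < B3 - B2 by linarith))] at h
          linarith
        · have := mul_nonneg hw0 (show (0:ℝ) ≤ B3 - B1 by linarith)
          linarith
        · rw [hw]; linarith
        · rw [hw]; ring

lemma pairCase (htree : ∀ v : ι, ∃ n : ℕ, parent^[n] v = r) (hroot : parent r = r)
    (hα : ∀ v, 0 ≤ α v) (hβ : ∀ v, 0 ≤ β v)
    (T₁ T₂ : Finset {v : ι // v ≠ r}) (hsub : T₁ ⊆ T₂)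
    (h1 : dcF r parent T₁) (h2 : dcF r parent T₂)
    (l₁ l₂ : ℝ) (hl₁ : 0 ≤ l₁) (hl₂ : 0 ≤ l₂) (hsum : l₁ + l₂ = 1)
    (hbud : l₁ * (∑ v ∈ T₁, β v) + l₂ * (∑ v ∈ T₂, β v) ≤ B) :
    ∃ S, dcF r parent S ∧ (∑ v ∈ S, β v) ≤ B ∧
      l₁ * (∑ v ∈ T₁, α v) + l₂ * (∑ v ∈ T₂, α v) ≤ (∑ v ∈ S, α v) + CM r parent α univ := by
  classical
  have hβm : (∑ v ∈ T₁, β v) ≤ ∑ v ∈ T₂, β v :=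
    Finset.sum_le_sum_of_subset_of_nonneg hsub (fun i _ _ => hβ i)
  have hαm : (∑ v ∈ T₁, α v) ≤ ∑ v ∈ T₂, α v :=
    Finset.sum_le_sum_of_subset_of_nonneg hsub (fun i _ _ => hα i)
  have hβ₁0 : 0 ≤ ∑ v ∈ T₁, β v := Finset.sum_nonneg fun v _ => hβ v
  have hα₁0 : 0 ≤ ∑ v ∈ T₁, α v := Finset.sum_nonneg fun v _ => hα v
  have hCM0 := CM_nonneg r parent α univ
  by_cases hq : (∑ v ∈ T₂, β v) ≤ B
  · refine ⟨T₂, h2, hq, ?_⟩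
    nlinarith
  · push_neg at hq
    have hβ₁B : (∑ v ∈ T₁, β v) ≤ B := by nlinarith
    set D := T₂ \ T₁ with hDdef
    have hsdβ : (∑ v ∈ D, β v) + (∑ v ∈ T₁, β v) = ∑ v ∈ T₂, β v := Finset.sum_sdiff hsub
    have hsdα : (∑ v ∈ D, α v) + (∑ v ∈ T₁, α v) = ∑ v ∈ T₂, α v := Finset.sum_sdiff hsub
    have hαD0 : 0 ≤ ∑ v ∈ D, α v := Finset.sum_nonneg fun v _ => hα v
    have hβDpos : 0 < ∑ v ∈ D, β v := by linarith
    set θ' := (B - ∑ v ∈ T₁, β v) / (∑ v ∈ D, β v) with hθ'def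
    have hθ'0 : 0 ≤ θ' := div_nonneg (by linarith) hβDpos.le
    have hθ'1 : θ' ≤ 1 := by
      rw [hθ'def, div_le_one hβDpos]; linarith
    have hθ'bud : θ' * (∑ v ∈ D, β v) ≤ B - ∑ v ∈ T₁, β v := by
      rw [hθ'def, div_mul_cancel₀ _ (ne_of_gt hβDpos)]
    obtain ⟨G, hGsub, hGcl, hGb, hGval⟩ :=
      star r parent α β htree hroot hα hβ D.card D (le_refl _) θ' (B - ∑ v ∈ T₁, β v) hθ'0 hθ'1 hθ'bud
    have hdisj : Disjoint T₁ G := Finset.disjoint_sdiff.mono_right hGsub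
    refine ⟨T₁ ∪ G, ?_, ?_, ?_⟩
    · intro v hv u hpar
      rcases mem_union.mp hv with hv | hv
      · exact mem_union_left _ (h1 v hv u hpar)
      · have hvT₂ : v ∈ T₂ := (mem_sdiff.mp (hGsub hv)).1
        have huT₂ : u ∈ T₂ := h2 v hvT₂ u hpar
        by_cases hu : u ∈ T₁
        · exact mem_union_left _ hu
        · exact mem_union_right _ (hGcl v hv u hpar (mem_sdiff.mpr ⟨huT₂, hu⟩))
    · rw [Finset.sum_union hdisj]; linarith
    · rw [Finset.sum_union hdisj]
      have hl₂θ : l₂ ≤ θ' := by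
        rw [hθ'def, le_div_iff₀ hβDpos]
        nlinarith
      have hCMD : CM r parent α D ≤ CM r parent α univ :=
        CM_mono r parent α (subset_univ D)
      have h2θ : l₂ * (∑ v ∈ D, α v) ≤ θ' * (∑ v ∈ D, α v) :=
        mul_le_mul_of_nonneg_right hl₂θ hαD0
      nlinarith

lemma exchg (htree : ∀ v : ι, ∃ n : ℕ, parent^[n] v = r) (hroot : parent r = r)
    (hα : ∀ v, 0 ≤ α v) (hβ : ∀ v, 0 ≤ β v) (hB : 0 ≤ B) :
    ∀ N : ℕ, ∀ 𝒯 : Finset (Finset {v : ι // v ≠ r}), 𝒯.card ≤ N →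
      ∀ lam : Finset {v : ι // v ≠ r} → ℝ,
      (∀ T ∈ 𝒯, dcF r parent T) → (∀ T ∈ 𝒯, ∀ T' ∈ 𝒯, T ⊆ T' ∨ T' ⊆ T) →
      (∀ T ∈ 𝒯, 0 ≤ lam T) → (∑ T ∈ 𝒯, lam T) = 1 →
      (∑ T ∈ 𝒯, lam T * ∑ v ∈ T, β v) ≤ B →
      ∃ S, dcF r parent S ∧ (∑ v ∈ S, β v) ≤ B ∧
        (∑ T ∈ 𝒯, lam T * ∑ v ∈ T, α v) ≤ (∑ v ∈ S, α v) + CM r parent α univ := by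
  intro N
  induction N with
  | zero =>
    intro 𝒯 hcard lam hdc hnest hnn hmass hbud
    exfalso
    have : 𝒯 = ∅ := Finset.card_eq_zero.mp (Nat.le_zero.mp hcard)
    subst this
    simp at hmass
  | succ N ih =>
    intro 𝒯 hcard lam hdc hnest hnn hmass hbud
    classical
    by_cases hc1 : 𝒯.card = 0
    · exfalso
      have : 𝒯 = ∅ := Finset.card_eq_zero.mp hc1
      subst this
      simp at hmass
    by_cases hc2 : 𝒯.card = 1
    · obtain ⟨T, hT⟩ := Finset.card_eq_one.mp hc2
      subst hT
      rw [Finset.sum_singleton] at hmass hbud ⊢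
      rw [hmass, one_mul] at hbud ⊢
      exact ⟨T, hdc T (mem_singleton_self T), hbud,
        by linarith [CM_nonneg r parent α (univ : Finset {v : ι // v ≠ r})]⟩
    by_cases hc3 : 𝒯.card = 2
    · obtain ⟨a, b, hab, hT⟩ := Finset.card_eq_two.mp hc3
      subst hT
      rw [Finset.sum_pair hab] at hmass hbud ⊢
      have ha : a ∈ ({a, b} : Finset (Finset {v : ι // v ≠ r})) := by simp
      have hb : b ∈ ({a, b} : Finset (Finset {v : ι // v ≠ r})) := by simp
      rcases hnest a ha b hb with hsub | hsub
      · exact pairCase r parent α β B htree hroot hα hβ a b hsub (hdc a ha) (hdc b hb)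
          (lam a) (lam b) (hnn a ha) (hnn b hb) hmass hbud
      · obtain ⟨S, hS1, hS2, hS3⟩ := pairCase r parent α β B htree hroot hα hβ b a hsub (hdc b hb) (hdc a ha)
          (lam b) (lam a) (hnn b hb) (hnn a ha) (by linarith) (by linarith)
        exact ⟨S, hS1, hS2, by linarith⟩
    · -- at least three sets
      have h3 : 3 ≤ 𝒯.card := by omega
      have hne : 𝒯.Nonempty := Finset.card_pos.mp (by omega)
      obtain ⟨a, ha⟩ := hne
      have hea : (𝒯.erase a).Nonempty := by
        apply Finset.card_pos.mp
        rw [Finset.card_erase_of_mem ha]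
        omega
      obtain ⟨b, hb⟩ := hea
      have hba : b ≠ a := (mem_erase.mp hb).1
      have hb𝒯 : b ∈ 𝒯 := (mem_erase.mp hb).2
      have heb : ((𝒯.erase a).erase b).Nonempty := by
        apply Finset.card_pos.mp
        rw [Finset.card_erase_of_mem hb, Finset.card_erase_of_mem ha]
        omega
      obtain ⟨c, hcc⟩ := heb
      have hcb : c ≠ b := (mem_erase.mp hcc).1
      have hca : c ≠ a := (mem_erase.mp (mem_erase.mp hcc).2).1
      have hc𝒯 : c ∈ 𝒯 := (mem_erase.mp (mem_erase.mp hcc).2).2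
      -- sort the three sets by inclusion
      obtain ⟨s, t, u, hs𝒯, ht𝒯, hu𝒯, hst, hsu, htu, hsubst, hsubtu⟩ :
          ∃ s t u, s ∈ 𝒯 ∧ t ∈ 𝒯 ∧ u ∈ 𝒯 ∧ s ≠ t ∧ s ≠ u ∧ t ≠ u ∧ s ⊆ t ∧ t ⊆ u := by
        rcases hnest a ha b hb𝒯 with h1 | h1 <;>
          rcases hnest b hb𝒯 c hc𝒯 with h2 | h2 <;>
            rcases hnest a ha c hc𝒯 with h3' | h3'
        · exact ⟨a, b, c, ha, hb𝒯, hc𝒯, hba.symm, hca.symm, hcb.symm, h1, h2⟩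
        · exact ⟨a, b, c, ha, hb𝒯, hc𝒯, hba.symm, hca.symm, hcb.symm, h1, h2⟩
        · exact ⟨a, c, b, ha, hc𝒯, hb𝒯, hca.symm, hba.symm, hcb, h3', h2⟩
        · exact ⟨c, a, b, hc𝒯, ha, hb𝒯, hca, hcb, hba.symm, h3', h1⟩
        · exact ⟨b, a, c, hb𝒯, ha, hc𝒯, hba, hcb.symm, hca.symm, h1, h3'⟩
        · exact ⟨b, c, a, hb𝒯, hc𝒯, ha, hcb.symm, hba, hca, h2, h3'⟩
        · exact absurd (Finset.Subset.antisymm h3' (h2.trans h1)) (fun h => hca h.symm)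
        · exact ⟨c, b, a, hc𝒯, hb𝒯, ha, hcb, hca, hba, h2, h1⟩
      have hB12 : (∑ v ∈ s, β v) ≤ ∑ v ∈ t, β v :=
        Finset.sum_le_sum_of_subset_of_nonneg hsubst (fun i _ _ => hβ i)
      have hB23 : (∑ v ∈ t, β v) ≤ ∑ v ∈ u, β v :=
        Finset.sum_le_sum_of_subset_of_nonneg hsubtu (fun i _ _ => hβ i)
      have hA12 : (∑ v ∈ s, α v) ≤ ∑ v ∈ t, α v :=
        Finset.sum_le_sum_of_subset_of_nonneg hsubst (fun i _ _ => hα i)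
      have hA23 : (∑ v ∈ t, α v) ≤ ∑ v ∈ u, α v :=
        Finset.sum_le_sum_of_subset_of_nonneg hsubtu (fun i _ _ => hα i)
      obtain ⟨δ1, δ2, δ3, hdsum, hdbud, hdval, hnn1, hnn2, hnn3, hzero⟩ :=
        move (lam s) (lam t) (lam u) (∑ v ∈ s, α v) (∑ v ∈ t, α v) (∑ v ∈ u, α v)
          (∑ v ∈ s, β v) (∑ v ∈ t, β v) (∑ v ∈ u, β v)
          (hnn s hs𝒯) (hnn t ht𝒯) (hnn u hu𝒯) hA12 hA23 hB12 hB23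
      set lam' : Finset {v : ι // v ≠ r} → ℝ := fun T =>
        if T = s then lam s + δ1 else if T = t then lam t + δ2
        else if T = u then lam u + δ3 else lam T with hlam'def
      have hl's : lam' s = lam s + δ1 := by simp [hlam'def]
      have hl't : lam' t = lam t + δ2 := by simp [hlam'def, Ne.symm hst]
      have hl'u : lam' u = lam u + δ3 := by simp [hlam'def, Ne.symm hsu, Ne.symm htu]
      set rest := ((𝒯.erase s).erase t).erase u with hrestdef
      have hrest𝒯 : rest ⊆ 𝒯 :=
        (erase_subset _ _).trans ((erase_subset _ _).trans (erase_subset _ _))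
      have h𝒯eq : 𝒯 = insert s (insert t (insert u rest)) := by
        ext w
        simp only [mem_insert, hrestdef, mem_erase]
        constructor
        · intro hw
          by_cases h1 : w = s
          · exact Or.inl h1
          by_cases h2 : w = t
          · exact Or.inr (Or.inl h2)
          by_cases h3 : w = u
          · exact Or.inr (Or.inr (Or.inl h3))
          · exact Or.inr (Or.inr (Or.inr ⟨h3, h2, h1, hw⟩))
        · rintro (rfl | rfl | rfl | ⟨_, _, _, hw⟩)
          · exact hs𝒯
          · exact ht𝒯
          · exact hu𝒯
          · exact hw
      have hsnot : s ∉ insert t (insert u rest) := by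
        simp only [mem_insert, hrestdef, mem_erase]
        push_neg
        exact ⟨hst, hsu, fun _ _ h => absurd rfl h⟩
      have htnot : t ∉ insert u rest := by
        simp only [mem_insert, hrestdef, mem_erase]
        push_neg
        exact ⟨htu, fun _ h _ => absurd rfl h⟩
      have hunot : u ∉ rest := by
        simp only [hrestdef, mem_erase]
        push_neg
        intro h
        exact absurd rfl h
      have expand : ∀ g : Finset {v : ι // v ≠ r} → ℝ,
          ∑ T ∈ 𝒯, g T = g s + g t + g u + ∑ T ∈ rest, g T := by
        intro g
        conv_lhs => rw [h𝒯eq]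
        rw [Finset.sum_insert hsnot, Finset.sum_insert htnot, Finset.sum_insert hunot]
        ring
      have hrest : ∀ T ∈ rest, lam' T = lam T := by
        intro T hT
        simp only [hrestdef, mem_erase] at hT
        simp [hlam'def, hT.1, hT.2.1, hT.2.2.1]
      have hmass' : (∑ T ∈ 𝒯, lam' T) = 1 := by
        rw [expand lam'] at *
        rw [expand lam] at hmass
        rw [hl's, hl't, hl'u, Finset.sum_congr rfl hrest]
        linarith
      have hbud' : (∑ T ∈ 𝒯, lam' T * ∑ v ∈ T, β v) ≤ B := by
        rw [expand (fun T => lam' T * ∑ v ∈ T, β v)]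
        rw [expand (fun T => lam T * ∑ v ∈ T, β v)] at hbud
        have hcongr : ∑ T ∈ rest, lam' T * (∑ v ∈ T, β v)
            = ∑ T ∈ rest, lam T * (∑ v ∈ T, β v) :=
          Finset.sum_congr rfl (fun T hT => by rw [hrest T hT])
        simp only [hl's, hl't, hl'u]
        rw [hcongr]
        nlinarith
      have hval' : (∑ T ∈ 𝒯, lam T * ∑ v ∈ T, α v) ≤ ∑ T ∈ 𝒯, lam' T * ∑ v ∈ T, α v := by
        rw [expand (fun T => lam' T * ∑ v ∈ T, α v), expand (fun T => lam T * ∑ v ∈ T, α v)]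
        have hcongr : ∑ T ∈ rest, lam' T * (∑ v ∈ T, α v)
            = ∑ T ∈ rest, lam T * (∑ v ∈ T, α v) :=
          Finset.sum_congr rfl (fun T hT => by rw [hrest T hT])
        simp only [hl's, hl't, hl'u]
        rw [hcongr]
        nlinarith
      have hnonneg' : ∀ T ∈ 𝒯, 0 ≤ lam' T := by
        intro T hT
        by_cases h1 : T = s
        · subst h1; rw [hl's]; exact hnn1
        by_cases h2 : T = t
        · subst h2; rw [hl't]; exact hnn2
        by_cases h3 : T = u
        · subst h3; rw [hl'u]; exact hnn3
        · simp only [hlam'def, if_neg h1, if_neg h2, if_neg h3]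
          exact hnn T hT
      obtain ⟨X, hX𝒯, hXzero⟩ : ∃ X ∈ 𝒯, lam' X = 0 := by
        rcases hzero with hz | hz | hz
        · exact ⟨s, hs𝒯, by rw [hl's]; exact hz⟩
        · exact ⟨t, ht𝒯, by rw [hl't]; exact hz⟩
        · exact ⟨u, hu𝒯, by rw [hl'u]; exact hz⟩
      have hcard' : (𝒯.erase X).card ≤ N := by
        rw [Finset.card_erase_of_mem hX𝒯]
        omega
      have hsplitX : ∀ g : Finset {v : ι // v ≠ r} → ℝ, g X = 0 →
          ∑ T ∈ 𝒯.erase X, g T = ∑ T ∈ 𝒯, g T := by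
        intro g hg
        have h := Finset.sum_erase_add 𝒯 g hX𝒯
        rw [hg] at h
        linarith
      obtain ⟨S, hS1, hS2, hS3⟩ := ih (𝒯.erase X) hcard' lam'
        (fun T hT => hdc T (mem_of_mem_erase hT))
        (fun T hT T' hT' => hnest T (mem_of_mem_erase hT) T' (mem_of_mem_erase hT'))
        (fun T hT => hnonneg' T (mem_of_mem_erase hT))
        (by rw [hsplitX lam' hXzero]; exact hmass')
        (by rw [hsplitX (fun T => lam' T * ∑ v ∈ T, β v) (by show lam' X * (∑ v ∈ X, β v) = 0; rw [hXzero]; ring)]; exact hbud')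
      refine ⟨S, hS1, hS2, ?_⟩
      have heq := hsplitX (fun T => lam' T * ∑ v ∈ T, α v) (by show lam' X * (∑ v ∈ X, α v) = 0; rw [hXzero]; ring)
      rw [heq] at hS3
      linarith


noncomputable section PerX
section Decomp

variable (x : {v : ι // v ≠ r} → ℝ)

def Wv : Finset ℝ := univ.image x

noncomputable def Lay (t : ℝ) : Finset {v : ι // v ≠ r} :=
  univ.filter (fun u => t ≤ x u)

noncomputable def nval (S : Finset {v : ι // v ≠ r}) : ℝ :=
  (insert (0:ℝ) ((univ \ S).image x)).max' (insert_nonempty _ _)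

noncomputable def Mx : ℝ := (insert (0:ℝ) (Wv r x)).max' (insert_nonempty _ _)

noncomputable def lamx (S : Finset {v : ι // v ≠ r}) : ℝ :=
  if hS : S.Nonempty then ((S.image x).min' (hS.image x)) - nval r x S
  else 1 - Mx r x

lemma mem_Lay {t : ℝ} {u : {v : ι // v ≠ r}} : u ∈ Lay r x t ↔ t ≤ x u := by
  simp [Lay]

lemma Lay_ne {t : ℝ} (ht : t ∈ Wv r x) : (Lay r x t).Nonempty := by
  obtain ⟨u, _, hxu⟩ := Finset.mem_image.mp ht
  exact ⟨u, (mem_Lay r x).mpr (le_of_eq hxu.symm)⟩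

lemma Wv_nonneg (hx0 : ∀ v, 0 ≤ x v) : ∀ s ∈ Wv r x, 0 ≤ s := by
  intro s hs
  obtain ⟨u, _, hxu⟩ := Finset.mem_image.mp hs
  exact hxu ▸ hx0 u

lemma lam_Lay (hx0 : ∀ v, 0 ≤ x v) {t : ℝ} (ht : t ∈ Wv r x) :
    lamx r x (Lay r x t) = t - prevv (Wv r x) t := by
  have hne := Lay_ne r x ht
  rw [lamx, dif_pos hne]
  have hmin : ((Lay r x t).image x).min' (hne.image x) = t := by
    apply le_antisymm
    · obtain ⟨u, _, hxu⟩ := Finset.mem_image.mp ht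
      have hu : u ∈ Lay r x t := (mem_Lay r x).mpr (le_of_eq hxu.symm)
      have h := Finset.min'_le ((Lay r x t).image x) (x u) (Finset.mem_image_of_mem x hu)
      exact le_of_le_of_eq h hxu
    · apply Finset.le_min'
      intro y hy
      obtain ⟨u, hu, hxu⟩ := Finset.mem_image.mp hy
      exact hxu ▸ (mem_Lay r x).mp hu
  have hseteq : (univ \ Lay r x t).image x = (Wv r x).filter (fun s => s < t) := by
    ext y
    simp only [Wv, Finset.mem_image, Finset.mem_sdiff, Finset.mem_filter, mem_univ, true_and]
    constructor
    · rintro ⟨u, hu, rfl⟩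
      rw [mem_Lay] at hu
      push_neg at hu
      exact ⟨⟨u, rfl⟩, hu⟩
    · rintro ⟨⟨u, rfl⟩, hy⟩
      refine ⟨u, ?_, rfl⟩
      rw [mem_Lay]
      push_neg
      exact hy
  have hnv : nval r x (Lay r x t) = prevv (Wv r x) t := by
    apply le_antisymm
    · apply Finset.max'_le
      intro y hy
      apply Finset.le_max'
      rw [Finset.mem_insert] at hy ⊢
      rcases hy with rfl | hy
      · exact Or.inl rfl
      · exact Or.inr (hseteq ▸ hy)
    · apply Finset.max'_le
      intro y hy
      apply Finset.le_max'
      rw [Finset.mem_insert] at hy ⊢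
      rcases hy with rfl | hy
      · exact Or.inl rfl
      · exact Or.inr (hseteq ▸ hy)
  rw [hmin, hnv]

lemma Lay_inj {t t' : ℝ} (ht : t ∈ Wv r x) (ht' : t' ∈ Wv r x)
    (h : Lay r x t = Lay r x t') : t = t' := by
  by_contra hne
  rcases lt_or_gt_of_ne hne with hlt | hlt
  · obtain ⟨u, _, hxu⟩ := Finset.mem_image.mp ht
    have hu : u ∈ Lay r x t := (mem_Lay r x).mpr (le_of_eq hxu.symm)
    rw [h, mem_Lay] at hu
    rw [← hxu] at hlt
    linarith
  · obtain ⟨u, _, hxu⟩ := Finset.mem_image.mp ht'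
    have hu : u ∈ Lay r x t' := (mem_Lay r x).mpr (le_of_eq hxu.symm)
    rw [← h, mem_Lay] at hu
    rw [← hxu] at hlt
    linarith

lemma Mx_le_one (hx1 : ∀ v, x v ≤ 1) : Mx r x ≤ 1 := by
  apply Finset.max'_le
  intro y hy
  rcases Finset.mem_insert.mp hy with rfl | hy
  · exact zero_le_one
  · obtain ⟨u, _, hxu⟩ := Finset.mem_image.mp hy
    exact hxu ▸ hx1 u

end Decomp

lemma perx (htree : ∀ v : ι, ∃ n : ℕ, parent^[n] v = r) (hroot : parent r = r)
    (α β : {v : ι // v ≠ r} → ℝ) (B : ℝ)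
    (hα : ∀ v, 0 ≤ α v) (hβ : ∀ v, 0 ≤ β v) (hB : 0 ≤ B)
    (x : {v : ι // v ≠ r} → ℝ)
    (hx0 : ∀ v, 0 ≤ x v) (hx1 : ∀ v, x v ≤ 1)
    (hmono : ∀ v u : {v : ι // v ≠ r}, parent u.1 = v.1 → x v ≤ x u)
    (hbud : (∑ v : {v : ι // v ≠ r}, β v * x v) ≤ B) :
    ∃ S, dcF r parent S ∧ (∑ v ∈ S, β v) ≤ B ∧
      (∑ v : {v : ι // v ≠ r}, α v * x v) ≤ (∑ v ∈ S, α v) + CM r parent α univ := by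
  classical
  set W := Wv r x with hWdef
  have hWnn : ∀ s ∈ W, 0 ≤ s := Wv_nonneg r x hx0
  set 𝒯 : Finset (Finset {v : ι // v ≠ r}) := insert ∅ (W.image (Lay r x)) with h𝒯def
  have hemp : (∅ : Finset {v : ι // v ≠ r}) ∉ W.image (Lay r x) := by
    intro h
    obtain ⟨t, ht, hLay⟩ := Finset.mem_image.mp h
    obtain ⟨u, hu⟩ := Lay_ne r x ht
    rw [hLay] at hu
    simp at hu
  -- empty case lamx
  have hlamemp : lamx r x ∅ = 1 - Mx r x := by
    rw [lamx, dif_neg (by simp)]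
  -- pointwise identity
  have hpt : ∀ v : {v : ι // v ≠ r}, (∑ S ∈ 𝒯.filter (fun S => v ∈ S), lamx r x S) = x v := by
    intro v
    have hfil : 𝒯.filter (fun S => v ∈ S) = (W.filter (fun s => s ≤ x v)).image (Lay r x) := by
      ext S
      simp only [Finset.mem_filter, Finset.mem_image, h𝒯def, Finset.mem_insert]
      constructor
      · rintro ⟨hS | hS, hvS⟩
        · subst hS; simp at hvS
        · obtain ⟨t, ht, rfl⟩ := hS
          exact ⟨t, ⟨ht, (mem_Lay r x).mp hvS⟩, rfl⟩
      · rintro ⟨t, ⟨ht, htv⟩, rfl⟩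
        exact ⟨Or.inr ⟨t, ht, rfl⟩, (mem_Lay r x).mpr htv⟩
    rw [hfil]
    rw [Finset.sum_image (fun t ht t' ht' h =>
      Lay_inj r x (Finset.mem_of_mem_filter t ht) (Finset.mem_of_mem_filter t' ht') h)]
    have hxvW : x v ∈ W := Finset.mem_image_of_mem x (mem_univ v)
    have hcongr : ∑ t ∈ W.filter (fun s => s ≤ x v), lamx r x (Lay r x t)
        = ∑ t ∈ W.filter (fun s => s ≤ x v), (t - prevv W t) :=
      Finset.sum_congr rfl (fun t ht => lam_Lay r x hx0 (Finset.mem_of_mem_filter t ht))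
    rw [hcongr]
    exact telescope W hWnn (W.filter (fun s => s ≤ x v)).card (x v) hxvW (le_refl _)
  -- generic sum identity
  have key : ∀ g : {v : ι // v ≠ r} → ℝ,
      (∑ S ∈ 𝒯, lamx r x S * ∑ v ∈ S, g v) = ∑ v : {v : ι // v ≠ r}, g v * x v := by
    intro g
    have hinner : ∀ S : Finset {v : ι // v ≠ r},
        (∑ v ∈ S, g v) = ∑ v : {v : ι // v ≠ r}, if v ∈ S then g v else 0 := by
      intro S
      rw [Finset.sum_ite_mem, univ_inter]
    calc (∑ S ∈ 𝒯, lamx r x S * ∑ v ∈ S, g v)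
        = ∑ S ∈ 𝒯, ∑ v : {v : ι // v ≠ r}, lamx r x S * (if v ∈ S then g v else 0) := by
          apply Finset.sum_congr rfl
          intro S _
          rw [hinner S, Finset.mul_sum]
      _ = ∑ v : {v : ι // v ≠ r}, ∑ S ∈ 𝒯, lamx r x S * (if v ∈ S then g v else 0) :=
          Finset.sum_comm
      _ = ∑ v : {v : ι // v ≠ r}, g v * x v := by
          apply Finset.sum_congr rfl
          intro v _
          have h1 : ∑ S ∈ 𝒯, lamx r x S * (if v ∈ S then g v else 0)
              = ∑ S ∈ 𝒯, (if v ∈ S then lamx r x S else 0) * g v := by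
            apply Finset.sum_congr rfl
            intro S _
            by_cases h : v ∈ S <;> simp [h]
          rw [h1, ← Finset.sum_mul, ← Finset.sum_filter, hpt v, mul_comm]
  -- total mass
  have hmass : (∑ S ∈ 𝒯, lamx r x S) = 1 := by
    rw [h𝒯def, Finset.sum_insert hemp, hlamemp]
    rw [Finset.sum_image (fun t ht t' ht' h => Lay_inj r x ht ht' h)]
    have hcongr : ∑ t ∈ W, lamx r x (Lay r x t) = ∑ t ∈ W, (t - prevv W t) :=
      Finset.sum_congr rfl (fun t ht => lam_Lay r x hx0 ht)
    rw [hcongr]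
    rcases Finset.eq_empty_or_nonempty W with hWe | hWne
    · have hMx : Mx r x = 0 := by
        apply le_antisymm
        · apply Finset.max'_le
          intro y hy
          rcases Finset.mem_insert.mp hy with rfl | hy
          · exact le_refl 0
          · rw [← hWdef, hWe] at hy; simp at hy
        · exact Finset.le_max' _ 0 (Finset.mem_insert_self _ _)
      rw [hWe, hMx]
      simp
    · set c := W.max' hWne with hcdef
      have hcW : c ∈ W := Finset.max'_mem W hWne
      have hfW : W.filter (fun s => s ≤ c) = W := by
        apply Finset.filter_true_of_mem
        intro s hs
        exact Finset.le_max' W s hs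
      have htel := telescope W hWnn (W.filter (fun s => s ≤ c)).card c hcW (le_refl _)
      rw [hfW] at htel
      have hMx : Mx r x = c := by
        apply le_antisymm
        · apply Finset.max'_le
          intro y hy
          rcases Finset.mem_insert.mp hy with rfl | hy
          · exact hWnn c hcW
          · exact Finset.le_max' W y hy
        · exact Finset.le_max' _ c (Finset.mem_insert_of_mem hcW)
      rw [htel, hMx]
      ring
  -- nonnegativity
  have hnn : ∀ T ∈ 𝒯, 0 ≤ lamx r x T := by
    intro T hT
    rcases Finset.mem_insert.mp hT with rfl | hT
    · rw [hlamemp]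
      linarith [Mx_le_one r x hx1]
    · obtain ⟨t, ht, rfl⟩ := Finset.mem_image.mp hT
      rw [lam_Lay r x hx0 ht]
      have := prevv_le W hWnn (hWnn t ht)
      linarith
  -- dc and nested
  have hdc : ∀ T ∈ 𝒯, dcF r parent T := by
    intro T hT
    rcases Finset.mem_insert.mp hT with rfl | hT
    · intro v hv; simp at hv
    · obtain ⟨t, ht, rfl⟩ := Finset.mem_image.mp hT
      intro v hv u hpar
      rw [mem_Lay] at hv ⊢
      exact le_trans hv (hmono v u hpar)
  have hnest : ∀ T ∈ 𝒯, ∀ T' ∈ 𝒯, T ⊆ T' ∨ T' ⊆ T := by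
    intro T hT T' hT'
    rcases Finset.mem_insert.mp hT with rfl | hT
    · exact Or.inl (empty_subset _)
    rcases Finset.mem_insert.mp hT' with rfl | hT'
    · exact Or.inr (empty_subset _)
    obtain ⟨t, ht, rfl⟩ := Finset.mem_image.mp hT
    obtain ⟨t', ht', rfl⟩ := Finset.mem_image.mp hT'
    rcases le_total t' t with h | h
    · exact Or.inl (fun u hu => (mem_Lay r x).mpr (le_trans h ((mem_Lay r x).mp hu)))
    · exact Or.inr (fun u hu => (mem_Lay r x).mpr (le_trans h ((mem_Lay r x).mp hu)))
  have hbud𝒯 : (∑ T ∈ 𝒯, lamx r x T * ∑ v ∈ T, β v) ≤ B := by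
    rw [key β]
    exact hbud
  obtain ⟨S, hS1, hS2, hS3⟩ := exchg r parent α β B htree hroot hα hβ hB 𝒯.card 𝒯 (le_refl _)
    (lamx r x) hdc hnest hnn hmass hbud𝒯
  rw [key α] at hS3
  exact ⟨S, hS1, hS2, hS3⟩


end PerX
end Main
end Stmt4Aux

/-- Theorem 3.2: the tree-knapsack problem admits an integral feasible solution (a
downwards-closed set of non-root nodes within budget) of value at least the LP optimum
minus the maximum value of a chain. The rooted tree is given by a `parent` map on a
finite node type `ι` with root `r`; LP variables are indexed by non-root nodes. -/
theorem stmt4 {ι : Type*} [Fintype ι] [DecidableEq ι]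
    (r : ι) (parent : ι → ι) (hroot : parent r = r)
    (htree : ∀ v : ι, ∃ n : ℕ, parent^[n] v = r)
    (α β : {v : ι // v ≠ r} → ℝ) (hα : ∀ v, 0 ≤ α v) (hβ : ∀ v, 0 ≤ β v)
    (B : ℝ) (hB : 0 ≤ B)
    -- the feasible region of the LP relaxation
    (P : Set ({v : ι // v ≠ r} → ℝ))
    (hP : P = {x | (∀ v, 0 ≤ x v ∧ x v ≤ 1) ∧
      (∀ v u : {v : ι // v ≠ r}, parent u.1 = v.1 → x v ≤ x u) ∧
      ∑ v : {v : ι // v ≠ r}, β v * x v ≤ B})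
    -- the LP optimum
    (OPTLP : ℝ)
    (hOPT : OPTLP = sSup {t : ℝ | ∃ x ∈ P, t = ∑ v : {v : ι // v ≠ r}, α v * x v})
    -- the maximum value of a chain (a set of pairwise ancestor-comparable nodes)
    (chainMax : ℝ)
    (hchain : chainMax = sSup {t : ℝ | ∃ C : Finset {v : ι // v ≠ r},
      (∀ u ∈ C, ∀ v ∈ C, u = v ∨ (∃ n : ℕ, parent^[n] u.1 = v.1) ∨
        (∃ n : ℕ, parent^[n] v.1 = u.1)) ∧ t = ∑ v ∈ C, α v}) :
    ∃ S : Finset {v : ι // v ≠ r},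
      (∀ v ∈ S, ∀ u : {v : ι // v ≠ r}, parent u.1 = v.1 → u ∈ S) ∧
      ∑ v ∈ S, β v ≤ B ∧
      OPTLP - chainMax ≤ ∑ v ∈ S, α v := by
  classical
  have hupperset : ∀ t ∈ {t : ℝ | ∃ x ∈ P, t = ∑ v : {v : ι // v ≠ r}, α v * x v},
      ∃ S : Finset {v : ι // v ≠ r}, Stmt4Aux.dcF r parent S ∧ (∑ v ∈ S, β v) ≤ B ∧
        t ≤ (∑ v ∈ S, α v) + Stmt4Aux.CM r parent α univ := by
    rintro t ⟨x, hxP, rfl⟩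
    rw [hP] at hxP
    obtain ⟨hx01, hmono, hbud⟩ := hxP
    obtain ⟨S, hS1, hS2, hS3⟩ := Stmt4Aux.perx r parent htree hroot α β B hα hβ hB x
      (fun v => (hx01 v).1) (fun v => (hx01 v).2) hmono hbud
    exact ⟨S, hS1, hS2, hS3⟩
  set cand := (univ : Finset (Finset {v : ι // v ≠ r})).filter
      (fun S => Stmt4Aux.dcF r parent S ∧ ∑ v ∈ S, β v ≤ B) with hcanddef
  have hcandne : cand.Nonempty := by
    refine ⟨∅, Finset.mem_filter.mpr ⟨mem_univ _, fun v hv => by simp at hv, by simpa using hB⟩⟩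
  obtain ⟨Sstar, hSmem, hSmax⟩ := Finset.exists_max_image cand (fun S => ∑ v ∈ S, α v) hcandne
  have hSdc : Stmt4Aux.dcF r parent Sstar := (Finset.mem_filter.mp hSmem).2.1
  have hSb : (∑ v ∈ Sstar, β v) ≤ B := (Finset.mem_filter.mp hSmem).2.2
  have hCMeq : Stmt4Aux.CM r parent α univ = chainMax := by
    rw [hchain]
    apply congrArg sSup
    ext t
    simp only [Stmt4Aux.CMs, Stmt4Aux.chainP, Set.mem_setOf_eq]
    constructor
    · rintro ⟨C, _, hc, ht⟩; exact ⟨C, hc, ht⟩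
    · rintro ⟨C, hc, ht⟩; exact ⟨C, subset_univ C, hc, ht⟩
  have hupper : ∀ t ∈ {t : ℝ | ∃ x ∈ P, t = ∑ v : {v : ι // v ≠ r}, α v * x v},
      t ≤ (∑ v ∈ Sstar, α v) + chainMax := by
    intro t ht
    obtain ⟨S, hS1, hS2, hS3⟩ := hupperset t ht
    have hScand : S ∈ cand := Finset.mem_filter.mpr ⟨mem_univ _, hS1, hS2⟩
    have h4 := hSmax S hScand
    rw [hCMeq] at hS3
    linarith
  have hne : {t : ℝ | ∃ x ∈ P, t = ∑ v : {v : ι // v ≠ r}, α v * x v}.Nonempty := by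
    refine ⟨0, (fun _ => 0), ?_, by simp⟩
    rw [hP]
    exact ⟨fun v => ⟨le_refl 0, zero_le_one⟩, fun v u _ => le_refl 0, by simpa using hB⟩
  have hOPTle : OPTLP ≤ (∑ v ∈ Sstar, α v) + chainMax := by
    rw [hOPT]
    exact csSup_le hne hupper
  exact ⟨Sstar, hSdc, hSb, by linarith⟩
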